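/- Outside-option closure: let b : ℝ → ℝ be continuous, nondecreasing, and concave on [0, ∞), satisfying the vanishing-marginal-value condition, and let c > 0. Define v(t) = sup_{z ≥ 0} (b(t + z) − c·z) for t ≥ 0. Then for every t ≥ 0 the supremum is finite and attained by some z ≥ 0, and v is concave and nondecreasing on [0, ∞). -/

import Mathlib

open Finset

/-- The outside-option value: `v t = sup_{z ≥ 0} (b (t + z) - c * z)`. -/
noncomputable def outsideOption (b : ℝ → ℝ) (c : ℝ) (t : ℝ) : ℝ :=
  sSup ((fun z => b (t + z) - c * z) '' Set.Ici 0)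

/-- Linear (secant) upper bound for a concave function. -/
lemma concave_secant_bound {b : ℝ → ℝ} (hbconc : ConcaveOn ℝ (Set.Ici 0) b)
    {M y : ℝ} (hM : 0 ≤ M) (hy : M + 1 ≤ y) :
    b y ≤ b M + (y - M) * (b (M + 1) - b M) := by
  have hyM : (0:ℝ) < y - M := by linarith
  have hne : y - M ≠ 0 := ne_of_gt hyM
  have ha : 0 ≤ (y - M - 1) / (y - M) := div_nonneg (by linarith) hyM.le
  have ha' : 0 ≤ 1 / (y - M) := by positivity
  have hab : (y - M - 1) / (y - M) + 1 / (y - M) = 1 := by field_simp; ring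
  have hyc : (0:ℝ) ≤ y := by linarith
  have key := hbconc.2 (Set.mem_Ici.mpr hM) (Set.mem_Ici.mpr hyc) ha ha' hab
  simp only [smul_eq_mul] at key
  have hpt : (y - M - 1) / (y - M) * M + 1 / (y - M) * y = M + 1 := by
    field_simp; ring
  rw [hpt] at key
  have e1 : (y - M - 1) / (y - M) * (y - M) = y - M - 1 := by field_simp
  have e2 : 1 / (y - M) * (y - M) = 1 := by field_simp
  have key' := mul_le_mul_of_nonneg_right key hyM.le
  have key2 : (y - M - 1) * b M + b y ≤ b (M + 1) * (y - M) := by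
    calc (y - M - 1) * b M + b y
        = ((y - M - 1) / (y - M) * (y - M)) * b M
            + (1 / (y - M) * (y - M)) * b y := by rw [e1, e2]; ring
      _ = ((y - M - 1) / (y - M) * b M + 1 / (y - M) * b y) * (y - M) := by ring
      _ ≤ b (M + 1) * (y - M) := key'
  nlinarith [key2]

/-- Attainment of the supremum. -/
lemma outside_attained (b : ℝ → ℝ) (c : ℝ) (hc : 0 < c)
    (hbc : ContinuousOn b (Set.Ici 0))
    (hbconc : ConcaveOn ℝ (Set.Ici 0) b)
    (hvanish : Filter.Tendsto (fun t : ℝ => b (t + 1) - b t) Filter.atTop (nhds 0))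
    (t : ℝ) (ht : 0 ≤ t) :
    ∃ z, 0 ≤ z ∧ ∀ z', 0 ≤ z' → b (t + z') - c * z' ≤ b (t + z) - c * z := by
  -- find M with marginal value ≤ c/2
  have hev : ∀ᶠ x in Filter.atTop, b (x + 1) - b x < c / 2 :=
    hvanish.eventually_lt_const (by positivity)
  obtain ⟨M0, hM0⟩ := Filter.eventually_atTop.mp hev
  obtain ⟨M, hM_def⟩ : ∃ M : ℝ, M = max M0 0 := ⟨_, rfl⟩
  have hM0' : 0 ≤ M := hM_def ▸ le_max_right _ _
  have hMc : b (M + 1) - b M ≤ c / 2 := (hM0 M (hM_def ▸ le_max_left _ _)).le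
  -- linear decay bound
  have hdecay : ∀ z, M + 1 - t ≤ z →
      b (t + z) - c * z ≤ b M + (c / 2) * (t - M) - (c / 2) * z := by
    intro z hz
    have hy : M + 1 ≤ t + z := by linarith
    have h1 := concave_secant_bound hbconc hM0' hy
    have h2 : (t + z - M) * (b (M + 1) - b M) ≤ (t + z - M) * (c / 2) :=
      mul_le_mul_of_nonneg_left hMc (by linarith)
    nlinarith
  -- choose Z0 beyond which everything is below the value at 0
  obtain ⟨Z0, hZ0_def⟩ : ∃ Z0 : ℝ, Z0 = max (max (M + 1 - t) 0)
      ((b M + (c / 2) * (t - M) - b t) * 2 / c) := ⟨_, rfl⟩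
  have hZ0nn : 0 ≤ Z0 := hZ0_def ▸ le_trans (le_max_right _ 0) (le_max_left _ _)
  have htail : ∀ z, Z0 ≤ z → b (t + z) - c * z ≤ b t := by
    intro z hz
    rw [hZ0_def] at hz
    have h1 : M + 1 - t ≤ z :=
      le_trans (le_trans (le_max_left _ 0) (le_max_left _ _)) hz
    have h2 : (b M + (c / 2) * (t - M) - b t) * 2 / c ≤ z :=
      le_trans (le_max_right _ _) hz
    have h3 := hdecay z h1
    rw [div_le_iff₀ hc] at h2
    nlinarith
  -- continuity on the compact set [0, Z0]
  have hcont : ContinuousOn (fun z => b (t + z) - c * z) (Set.Icc 0 Z0) := by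
    apply ContinuousOn.sub
    · apply hbc.comp (by fun_prop : ContinuousOn (fun z : ℝ => t + z) (Set.Icc 0 Z0))
      intro z hz
      have := hz.1
      show (0:ℝ) ≤ t + z
      linarith
    · fun_prop
  obtain ⟨z, hzmem, hzmax⟩ := (isCompact_Icc (a := (0:ℝ)) (b := Z0)).exists_isMaxOn
    (Set.nonempty_Icc.mpr hZ0nn) hcont
  refine ⟨z, hzmem.1, fun z' hz' => ?_⟩
  by_cases h : z' ≤ Z0
  · exact hzmax (Set.mem_Icc.mpr ⟨hz', h⟩)
  · have h0 : b (t + 0) - c * 0 ≤ b (t + z) - c * z :=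
      hzmax (Set.mem_Icc.mpr ⟨le_refl 0, hZ0nn⟩)
    simp only [add_zero, mul_zero, sub_zero] at h0
    exact le_trans (htail z' (le_of_not_ge h)) h0

theorem outside_option_closure (b : ℝ → ℝ) (c : ℝ) (hc : 0 < c)
    (hbc : ContinuousOn b (Set.Ici 0))
    (hbm : MonotoneOn b (Set.Ici 0))
    (hbconc : ConcaveOn ℝ (Set.Ici 0) b)
    (hvanish : Filter.Tendsto (fun t : ℝ => b (t + 1) - b t) Filter.atTop (nhds 0)) :
    (∀ t, 0 ≤ t → ∃ z, 0 ≤ z ∧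
        outsideOption b c t = b (t + z) - c * z ∧
        ∀ z', 0 ≤ z' → b (t + z') - c * z' ≤ b (t + z) - c * z) ∧
      ConcaveOn ℝ (Set.Ici 0) (outsideOption b c) ∧
      MonotoneOn (outsideOption b c) (Set.Ici 0) := by
  have hne : ∀ t : ℝ, ((fun z => b (t + z) - c * z) '' Set.Ici 0).Nonempty :=
    fun t => ⟨b (t + 0) - c * 0, ⟨0, Set.self_mem_Ici, rfl⟩⟩
  have hmain : ∀ t, 0 ≤ t → ∃ z, 0 ≤ z ∧
      outsideOption b c t = b (t + z) - c * z ∧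
      ∀ z', 0 ≤ z' → b (t + z') - c * z' ≤ b (t + z) - c * z := by
    intro t ht
    obtain ⟨z, hz, hmax⟩ := outside_attained b c hc hbc hbconc hvanish t ht
    have hbdd : BddAbove ((fun z => b (t + z) - c * z) '' Set.Ici 0) := by
      refine ⟨b (t + z) - c * z, ?_⟩
      rintro _ ⟨z', hz', rfl⟩
      exact hmax z' hz'
    refine ⟨z, hz, ?_, hmax⟩
    apply le_antisymm
    · exact csSup_le (hne t) (by rintro _ ⟨z', hz', rfl⟩; exact hmax z' hz')
    · exact le_csSup hbdd ⟨z, hz, rfl⟩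
  refine ⟨hmain, ?_, ?_⟩
  · refine ⟨convex_Ici 0, fun x hx y hy a a' ha ha' haa => ?_⟩
    have hx0 : (0:ℝ) ≤ x := hx
    have hy0 : (0:ℝ) ≤ y := hy
    obtain ⟨zx, hzx, hvx, _⟩ := hmain x hx0
    obtain ⟨zy, hzy, hvy, _⟩ := hmain y hy0
    have hxy : (0:ℝ) ≤ a • x + a' • y := (convex_Ici 0) hx hy ha ha' haa
    obtain ⟨zw, hzw, hvw, hmaxw⟩ := hmain _ hxy
    simp only [smul_eq_mul] at hxy hvw hmaxw ⊢
    have hz : 0 ≤ a * zx + a' * zy := by positivity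
    have hel : b (a * x + a' * y + (a * zx + a' * zy)) - c * (a * zx + a' * zy)
        ≤ outsideOption b c (a * x + a' * y) := by
      rw [hvw]; exact hmaxw _ hz
    have hconc := hbconc.2 (Set.mem_Ici.mpr (by linarith : (0:ℝ) ≤ x + zx))
      (Set.mem_Ici.mpr (by linarith : (0:ℝ) ≤ y + zy)) ha ha' haa
    simp only [smul_eq_mul] at hconc
    have heq : a * (x + zx) + a' * (y + zy) = a * x + a' * y + (a * zx + a' * zy) := by ring
    rw [heq] at hconc
    rw [hvx, hvy]
    linarith
  · intro t1 h1 t2 h2 h12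
    have h10 : (0:ℝ) ≤ t1 := h1
    have h20 : (0:ℝ) ≤ t2 := h2
    obtain ⟨z2, hz2, hv2, hmax2⟩ := hmain t2 h20
    apply csSup_le (hne t1)
    rintro _ ⟨z, hz, rfl⟩
    have hz0 : (0:ℝ) ≤ z := hz
    have hb1 : b (t1 + z) ≤ b (t2 + z) :=
      hbm (Set.mem_Ici.mpr (by linarith)) (Set.mem_Ici.mpr (by linarith)) (by linarith)
    calc b (t1 + z) - c * z ≤ b (t2 + z) - c * z := by linarith
      _ ≤ b (t2 + z2) - c * z2 := hmax2 z hz0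
      _ = outsideOption b c t2 := hv2.symm
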